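/- arXiv:2011.00511 — 4 statements merged into one kernel-verified Lean document; each statement's English description precedes it below -/
import Mathlib

section
/- Let (G,σ) be a BMG that is explained by a binary tree (T,σ). If ab|b' is a forbidden triple of (G,σ) with σ(b)=σ(b'), then (T,σ) displays the triple bb'|a. -/
/-- A rooted phylogenetic tree with leaf set `V`, encoded by its hierarchy of clusters
(the cluster of a vertex is the set of leaves below it; inner vertices of a phylogenetic
tree have at least two children, so vertices correspond bijectively to clusters). -/
structure PhyloTree (V : Type*) where
  clusters : Set (Set V)
  nonempty_of_mem : ∀ A ∈ clusters, A.Nonempty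
  univ_mem : Set.univ ∈ clusters
  singleton_mem : ∀ v : V, {v} ∈ clusters
  nested : ∀ A ∈ clusters, ∀ B ∈ clusters, A ⊆ B ∨ B ⊆ A ∨ Disjoint A B

namespace PhyloTree

variable {V : Type*}

/-- The cluster of the last common ancestor of `x` and `y`: the smallest cluster
containing both (the clusters containing `x` and `y` form a chain, so their
intersection is the smallest one). -/
def lca (T : PhyloTree V) (x y : V) : Set V :=
  ⋂₀ {A | A ∈ T.clusters ∧ x ∈ A ∧ y ∈ A}

/-- The rooted triple `xy|z` (on three pairwise distinct leaves) is displayed by `T`: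
`lca(x,y) ≺ lca(x,z) = lca(y,z)`. -/
def Displays (T : PhyloTree V) (x y z : V) : Prop :=
  x ≠ y ∧ x ≠ z ∧ y ≠ z ∧ T.lca x y ⊂ T.lca x z ∧ T.lca x z = T.lca y z

/-- `T` displays every triple of `R`; a triple `(x, y, z)` encodes `xy|z`. -/
def DisplaysSet (T : PhyloTree V) (R : Set (V × V × V)) : Prop :=
  ∀ t ∈ R, T.Displays t.1 t.2.1 t.2.2

/-- `r(T)`, the set of triples displayed by `T`. -/
def triples (T : PhyloTree V) : Set (V × V × V) :=
  {t | T.Displays t.1 t.2.1 t.2.2}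

/-- `T` is binary: every inner vertex (cluster with at least two leaves) has exactly
two children, i.e. splits into two disjoint proper subclusters. -/
def IsBinary (T : PhyloTree V) : Prop :=
  ∀ A ∈ T.clusters, 1 < A.ncard →
    ∃ B ∈ T.clusters, ∃ D ∈ T.clusters,
      Disjoint B D ∧ B ∪ D = A ∧ B ⊂ A ∧ D ⊂ A

/-- `T'` is a refinement of `T`: they have the same leaf set and `T` is obtained from
`T'` by contracting inner edges, i.e. every cluster of `T` is a cluster of `T'`. -/
def Refines (T' T : PhyloTree V) : Prop :=
  T.clusters ⊆ T'.clusters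

end PhyloTree

section BMG

variable {V C : Type*}

/-- `y` is a best match of `x` in the leaf-colored tree `(T,σ)`. -/
def bestMatch (T : PhyloTree V) (σ : V → C) (x y : V) : Prop :=
  σ x ≠ σ y ∧ ∀ y' : V, σ y' = σ y → T.lca x y ⊆ T.lca x y'

/-- The leaf-colored tree `(T,σ)` explains the vertex-colored digraph `(E,σ)`,
i.e. `(E,σ)` is the best match graph of `(T,σ)`. -/
def Explains (T : PhyloTree V) (σ : V → C) (E : V → V → Prop) : Prop :=
  ∀ x y, E x y ↔ bestMatch T σ x y

/-- `(E,σ)` is a best match graph. -/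
def IsBMG (E : V → V → Prop) (σ : V → C) : Prop :=
  ∃ T : PhyloTree V, Explains T σ E

/-- `(E,σ)` is binary-explainable. -/
def BinaryExplainable (E : V → V → Prop) (σ : V → C) : Prop :=
  ∃ T : PhyloTree V, T.IsBinary ∧ Explains T σ E

/-- The informative triples `R(G,σ)`: `(a,b,b')` encodes `ab|b'`. -/
def informativeTriples (E : V → V → Prop) (σ : V → C) : Set (V × V × V) :=
  {t | σ t.1 ≠ σ t.2.1 ∧ σ t.2.1 = σ t.2.2 ∧ E t.1 t.2.1 ∧ ¬ E t.1 t.2.2}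

/-- The forbidden triples `F(G,σ)`: `(a,b,b')` encodes `ab|b'`. -/
def forbiddenTriples (E : V → V → Prop) (σ : V → C) : Set (V × V × V) :=
  {t | σ t.1 ≠ σ t.2.1 ∧ σ t.2.1 = σ t.2.2 ∧ t.2.1 ≠ t.2.2 ∧ E t.1 t.2.1 ∧ E t.1 t.2.2}

/-- The extended triple set `R^bin(G,σ) = R(G,σ) ∪ {bb'|a : ab|b' ∈ F(G,σ)}`. -/
def Rbin (E : V → V → Prop) (σ : V → C) : Set (V × V × V) :=
  informativeTriples E σ ∪ {t | (t.2.2, t.1, t.2.1) ∈ forbiddenTriples E σ}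

/-- Properly colored: arcs only between vertices of distinct colors. -/
def ProperlyColored (E : V → V → Prop) (σ : V → C) : Prop :=
  ∀ x y, E x y → σ x ≠ σ y

/-- sf-colored: properly colored and every vertex has, for each color (of the graph)
different from its own, at least one out-neighbor of that color. -/
def SfColored (E : V → V → Prop) (σ : V → C) : Prop :=
  ProperlyColored E σ ∧ ∀ x y : V, σ y ≠ σ x → ∃ z, E x z ∧ σ z = σ y

/-- A triple set is consistent if some tree displays all of its triples. -/
def Consistent (R : Set (V × V × V)) : Prop :=
  ∃ T : PhyloTree V, T.DisplaysSet R

/-- The closure `cl(R)`: all triples displayed by every tree displaying `R`. -/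
def tripleClosure (R : Set (V × V × V)) : Set (V × V × V) :=
  {t | ∀ T : PhyloTree V, T.DisplaysSet R → T.Displays t.1 t.2.1 t.2.2}

/-- `(T,σ)` is a least resolved tree for `(E,σ)`: it explains `(E,σ)` and no tree
obtained from it by contracting an edge (i.e. by removing a non-root inner cluster)
explains `(E,σ)`. -/
def IsLRT (T : PhyloTree V) (σ : V → C) (E : V → V → Prop) : Prop :=
  Explains T σ E ∧
    ∀ A ∈ T.clusters, A ≠ Set.univ → 1 < A.ncard →
      ∀ T' : PhyloTree V, T'.clusters = T.clusters \ {A} → ¬ Explains T' σ E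

end BMG

section Aho

variable {V : Type*}

/-- Adjacency in the Aho graph `[R,L]`: `x` and `y` are joined whenever `xy|z ∈ R`
for some `z ∈ L` (only triples with all leaves in `L` are taken into account). -/
def ahoAdj (R : Set (V × V × V)) (L : Set V) (x y : V) : Prop :=
  x ∈ L ∧ y ∈ L ∧ ∃ z ∈ L, (x, y, z) ∈ R ∨ (y, x, z) ∈ R

/-- The vertex set of the connected component of `x` in the Aho graph `[R,L]`. -/
def ahoComponent (R : Set (V × V × V)) (L : Set V) (x : V) : Set V :=
  {y | Relation.ReflTransGen (ahoAdj R L) x y}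

/-- The clusters of the Aho tree `Aho(R, V)`: the full leaf set, and recursively the
connected components of the Aho graphs. -/
inductive IsAhoCluster (R : Set (V × V × V)) : Set V → Prop
  | univ : IsAhoCluster R Set.univ
  | component {L : Set V} {x : V} :
      IsAhoCluster R L → x ∈ L → IsAhoCluster R (ahoComponent R L x)

/-- `T` is the Aho tree (`BUILD` tree) of the triple set `R` on the full leaf set. -/
def IsAhoTree (R : Set (V × V × V)) (T : PhyloTree V) : Prop :=
  T.clusters = {A | IsAhoCluster R A}

/-- The union of the leaf sets of the triples in `R`. -/
def tripleLeaves (R : Set (V × V × V)) : Set V :=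
  {v | ∃ t ∈ R, v = t.1 ∨ v = t.2.1 ∨ v = t.2.2}

end Aho

section Aux

variable {V : Type*}

lemma lca_comm (T : PhyloTree V) (x y : V) : T.lca x y = T.lca y x := by
  unfold PhyloTree.lca
  have h : {A | A ∈ T.clusters ∧ x ∈ A ∧ y ∈ A} = {A | A ∈ T.clusters ∧ y ∈ A ∧ x ∈ A} := by
    ext A; simp only [Set.mem_setOf_eq]; tauto
  rw [h]

lemma lca_spec [Finite V] (T : PhyloTree V) (x y : V) :
    T.lca x y ∈ T.clusters ∧ x ∈ T.lca x y ∧ y ∈ T.lca x y := by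
  set S : Set (Set V) := {A | A ∈ T.clusters ∧ x ∈ A ∧ y ∈ A} with hS
  have hne : (Set.univ : Set V) ∈ S := ⟨T.univ_mem, trivial, trivial⟩
  have hfin : S.Finite := Set.toFinite S
  obtain ⟨m, hm, hmin⟩ : ∃ m ∈ S, ∀ a' ∈ S, id a' ≤ id m → id m = id a' := by
    obtain ⟨m, hm, hmin⟩ := hfin.exists_minimalFor id S ⟨_, hne⟩
    exact ⟨m, hm, fun a' ha' h => le_antisymm (hmin ha' h) h⟩
  have hmsub : ∀ A ∈ S, m ⊆ A := by
    intro A hA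
    rcases T.nested m hm.1 A hA.1 with h | h | h
    · exact h
    · exact le_of_eq (hmin A hA h)
    · exact absurd (Set.not_disjoint_iff.mpr ⟨x, hm.2.1, hA.2.1⟩) (by simp [h])
  have heq : T.lca x y = m := by
    apply Set.Subset.antisymm (Set.sInter_subset_of_mem hm)
    exact Set.subset_sInter hmsub
  rw [heq]
  exact ⟨hm.1, hm.2⟩

lemma lca_subset (T : PhyloTree V) {x y : V} {A : Set V} (hA : A ∈ T.clusters)
    (hx : x ∈ A) (hy : y ∈ A) : T.lca x y ⊆ A :=
  Set.sInter_subset_of_mem ⟨hA, hx, hy⟩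

end Aux

/-- Lemma: infer-bba-triple.
Let `(G,σ)` be a BMG that is explained by a binary tree `(T,σ)`. If `ab|b'` is a
forbidden triple of `(G,σ)` with `σ(b)=σ(b')`, then `(T,σ)` displays the triple `bb'|a`. -/
theorem stmt0 {V C : Type*} [Fintype V] (E : V → V → Prop) (σ : V → C)
    (T : PhyloTree V) (hbin : T.IsBinary) (hexp : Explains T σ E)
    (a b b' : V) (hf : (a, b, b') ∈ forbiddenTriples E σ) (hcol : σ b = σ b') :
    T.Displays b b' a := by
  obtain ⟨hab, hbb'col, hbb', hEab, hEab'⟩ := hf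
  have hbm := (hexp a b).mp hEab
  have hbm' := (hexp a b').mp hEab'
  have hba : b ≠ a := fun h => hab (h ▸ rfl)
  have hb'a : b' ≠ a := fun h => hab (by rw [hcol, h])
  -- lca a b = lca a b'
  have hlcaeq : T.lca a b = T.lca a b' := by
    apply Set.Subset.antisymm
    · exact hbm.2 b' hcol.symm
    · exact hbm'.2 b hcol
  obtain ⟨hAcl, haA, hbA⟩ := lca_spec T a b
  have hb'A : b' ∈ T.lca a b := by
    rw [hlcaeq]; exact (lca_spec T a b').2.2
  -- lca b b' ⊆ lca a b
  have hsub : T.lca b b' ⊆ T.lca a b := lca_subset T hAcl hbA hb'A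
  have hne : T.lca b b' ≠ T.lca a b := by
    intro heq
    -- A := lca a b has at least two elements
    have hcard : 1 < (T.lca a b).ncard :=
      (Set.one_lt_ncard (Set.toFinite _)).mpr ⟨b, hbA, a, haA, hba⟩
    obtain ⟨B, hBcl, D, hDcl, hdisj, hunion, hBsub, hDsub⟩ :=
      hbin (T.lca a b) hAcl hcard
    have hmemBD : ∀ v ∈ T.lca a b, v ∈ B ∨ v ∈ D := by
      intro v hv; rw [← hunion] at hv; exact hv
    -- a and b in different parts
    have key : ∀ u v : V, u ∈ B → v ∈ B → u ∈ T.lca a b → v ∈ T.lca a b →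
        T.lca u v ≠ T.lca a b := by
      intro u v hu hv _ _ h
      have : T.lca u v ⊆ B := lca_subset T hBcl hu hv
      rw [h] at this
      exact hBsub.2 this
    have keyD : ∀ u v : V, u ∈ D → v ∈ D → u ∈ T.lca a b → v ∈ T.lca a b →
        T.lca u v ≠ T.lca a b := by
      intro u v hu hv _ _ h
      have : T.lca u v ⊆ D := lca_subset T hDcl hu hv
      rw [h] at this
      exact hDsub.2 this
    rcases hmemBD a haA with haB | haD
    · rcases hmemBD b hbA with hbB | hbD
      · exact key a b haB hbB haA hbA rfl
      · rcases hmemBD b' hb'A with hb'B | hb'D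
        · exact key a b' haB hb'B haA hb'A hlcaeq.symm
        · exact keyD b b' hbD hb'D hbA hb'A heq
    · rcases hmemBD b hbA with hbB | hbD
      · rcases hmemBD b' hb'A with hb'B | hb'D
        · exact key b b' hbB hb'B hbA hb'A heq
        · exact keyD a b' haD hb'D haA hb'A hlcaeq.symm
      · exact keyD a b haD hbD haA hbA rfl
  refine ⟨hbb', hba, hb'a, ?_, ?_⟩
  · rw [lca_comm T b a]
    exact HasSubset.Subset.ssubset_of_ne hsub hne
  · rw [lca_comm T b a, lca_comm T b' a, hlcaeq]
end

section
/- Let (G,σ) be an sf-colored digraph with vertex set L. Then every tree on leaf set L that displays all triples of R^bin(G,σ) explains (G,σ); in particular, (G,σ) is a BMG in this case. -/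
/-- Lemma: Rbin-explains-BMG.
Let `(G,σ)` be an sf-colored digraph with vertex set `L`. Then every tree on leaf set
`L` that displays all triples of `R^bin(G,σ)` explains `(G,σ)`; in particular,
`(G,σ)` is a BMG in this case. -/
theorem stmt2 {V C : Type*} [Fintype V] (E : V → V → Prop) (σ : V → C)
    (hsf : SfColored E σ) :
    (∀ T : PhyloTree V, T.DisplaysSet (Rbin E σ) → Explains T σ E) ∧
      ((∃ T : PhyloTree V, T.DisplaysSet (Rbin E σ)) → IsBMG E σ) := by
  have lca_comm : ∀ (T : PhyloTree V) (a b : V), T.lca a b = T.lca b a := by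
    intro T a b
    ext v
    constructor <;> intro h A hA <;> exact Set.mem_sInter.mp h _ ⟨hA.1, hA.2.2, hA.2.1⟩
  have main : ∀ T : PhyloTree V, T.DisplaysSet (Rbin E σ) → Explains T σ E := by
    intro T hT x y
    constructor
    · intro hxy
      refine ⟨hsf.1 x y hxy, ?_⟩
      intro y' hy'
      by_cases hyy' : y' = y
      · subst hyy'; exact subset_rfl
      by_cases hE' : E x y'
      · -- forbidden triple (x,y,y') ∈ F, so (y,y',x) ∈ Rbin
        have hmem : (y, y', x) ∈ Rbin E σ := by
          right
          exact ⟨hsf.1 x y hxy, hy'.symm, fun h => hyy' h.symm, hxy, hE'⟩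
        have hd := hT _ hmem
        obtain ⟨_, _, _, _, heq⟩ := hd
        have : T.lca x y = T.lca x y' := by
          rw [lca_comm T x y, lca_comm T x y']
          exact heq
        exact this.subset
      · -- informative triple (x,y,y')
        have hmem : (x, y, y') ∈ Rbin E σ := by
          left
          exact ⟨hsf.1 x y hxy, hy'.symm, hxy, hE'⟩
        have hd := hT _ hmem
        exact hd.2.2.2.1.subset
    · rintro ⟨hne, hmin⟩
      by_contra hE
      obtain ⟨z, hEz, hz⟩ := hsf.2 x y (Ne.symm hne)
      have hmem : (x, z, y) ∈ Rbin E σ := by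
        left
        exact ⟨fun h => hne (h.trans hz), hz, hEz, hE⟩
      have hd := hT _ hmem
      exact hd.2.2.2.1.not_subset (hmin z hz)
  exact ⟨main, fun ⟨T, hT⟩ => ⟨T, main T hT⟩⟩
end

section
/- A properly vertex-colored digraph (G,σ) is binary-explainable if and only if (i) (G,σ) is sf-colored and (ii) the extended triple set R^bin(G,σ) is consistent. -/
/-! ### Auxiliary lemmas -/

set_option linter.unusedSectionVars false

section Aux

variable {V : Type*} [Finite V]

/-- A finite nonempty chain of sets has a maximum. -/
lemma chain_max {S : Set (Set V)} (hne : S.Nonempty)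
    (hchain : ∀ A ∈ S, ∀ B ∈ S, A ⊆ B ∨ B ⊆ A) : ∃ M ∈ S, ∀ A ∈ S, A ⊆ M := by
  obtain ⟨M, hM, hmax⟩ := Set.Finite.exists_maximalFor id S (Set.toFinite S) hne
  refine ⟨M, hM, fun A hA => (hchain A hA M hM).elim id fun h => ?_⟩
  exact hmax hA h

/-- A finite nonempty chain of sets has a minimum. -/
lemma chain_min {S : Set (Set V)} (hne : S.Nonempty)
    (hchain : ∀ A ∈ S, ∀ B ∈ S, A ⊆ B ∨ B ⊆ A) : ∃ M ∈ S, ∀ A ∈ S, M ⊆ A := by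
  obtain ⟨M, hM, hmin⟩ := Set.Finite.exists_minimalFor id S (Set.toFinite S) hne
  refine ⟨M, hM, fun A hA => (hchain A hA M hM).elim (fun h => ?_) id⟩
  exact hmin hA h

namespace PhyloTree

variable (T : PhyloTree V)

/-- Two clusters sharing a point are nested. -/
lemma cluster_chain {A B : Set V} (hA : A ∈ T.clusters) (hB : B ∈ T.clusters)
    {x : V} (hxA : x ∈ A) (hxB : x ∈ B) : A ⊆ B ∨ B ⊆ A := by
  rcases T.nested A hA B hB with h | h | h
  · exact Or.inl h
  · exact Or.inr h
  · exact absurd hxB (Set.disjoint_left.mp h hxA)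

/-- The lca of `x` and `y` is the smallest cluster containing both. -/
lemma lca_spec (x y : V) :
    T.lca x y ∈ T.clusters ∧ x ∈ T.lca x y ∧ y ∈ T.lca x y := by
  set S : Set (Set V) := {A | A ∈ T.clusters ∧ x ∈ A ∧ y ∈ A} with hS
  have hne : S.Nonempty := ⟨Set.univ, T.univ_mem, trivial, trivial⟩
  have hchain : ∀ A ∈ S, ∀ B ∈ S, A ⊆ B ∨ B ⊆ A := fun A hA B hB =>
    T.cluster_chain hA.1 hB.1 hA.2.1 hB.2.1
  obtain ⟨M, hM, hmin⟩ := chain_min hne hchain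
  have : T.lca x y = M := by
    apply subset_antisymm (Set.sInter_subset_of_mem hM)
    exact Set.subset_sInter fun A hA => hmin A hA
  have h2 : T.lca x y ∈ S := this ▸ hM
  exact h2

lemma lca_mem_clusters (x y : V) : T.lca x y ∈ T.clusters := (T.lca_spec x y).1

lemma mem_lca_left (x y : V) : x ∈ T.lca x y := (T.lca_spec x y).2.1

lemma mem_lca_right (x y : V) : y ∈ T.lca x y := (T.lca_spec x y).2.2

lemma lca_subset {A : Set V} (hA : A ∈ T.clusters) {x y : V} (hx : x ∈ A) (hy : y ∈ A) :
    T.lca x y ⊆ A := Set.sInter_subset_of_mem ⟨hA, hx, hy⟩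

lemma lca_comm (x y : V) : T.lca x y = T.lca y x := by
  unfold lca
  have : {A | A ∈ T.clusters ∧ x ∈ A ∧ y ∈ A} = {A | A ∈ T.clusters ∧ y ∈ A ∧ x ∈ A} := by
    ext A; simp only [Set.mem_setOf_eq]; tauto
  rw [this]

/-- lcas over a common point are nested. -/
lemma lca_chain (x y z : V) : T.lca x y ⊆ T.lca x z ∨ T.lca x z ⊆ T.lca x y :=
  T.cluster_chain (T.lca_mem_clusters x y) (T.lca_mem_clusters x z)
    (T.mem_lca_left x y) (T.mem_lca_left x z)

/-- If `z` is outside `lca x y`, then `lca x y ⊊ lca x z`. -/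
lemma lca_ssubset_of_not_mem {x y z : V} (hz : z ∉ T.lca x y) :
    T.lca x y ⊂ T.lca x z := by
  rcases T.lca_chain x y z with h | h
  · exact HasSubset.Subset.ssubset_of_not_subset h (fun h' => hz (h' (T.mem_lca_right x z)))
  · exact absurd (h (T.mem_lca_right x z)) hz

/-- Refinements display all triples of the original tree. -/
lemma Displays.of_refines {T' T : PhyloTree V} (href : T'.Refines T)
    {x y z : V} (hd : T.Displays x y z) : T'.Displays x y z := by
  obtain ⟨hxy, hxz, hyz, hss, heq⟩ := hd
  have hsub : ∀ a b : V, T'.lca a b ⊆ T.lca a b := fun a b =>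
    Set.subset_sInter fun A hA =>
      Set.sInter_subset_of_mem (show A ∈ _ from ⟨href hA.1, hA.2⟩)
  have hzn : z ∉ T.lca x y := fun hzmem =>
    hss.not_subset (T.lca_subset (T.lca_mem_clusters x y) (T.mem_lca_left x y) hzmem)
  have hzn' : z ∉ T'.lca x y := fun h => hzn (hsub x y h)
  have h1 : T'.lca x y ⊂ T'.lca x z := T'.lca_ssubset_of_not_mem hzn'
  have h2 : T'.lca x y ⊆ T'.lca y z := by
    rcases T'.cluster_chain (T'.lca_mem_clusters y z) (T'.lca_mem_clusters x y)
      (T'.mem_lca_left y z) (T'.mem_lca_right x y) with h | h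
    · exact absurd (h (T'.mem_lca_right y z)) hzn'
    · exact h
  have h3 : T'.lca x z = T'.lca y z := by
    apply subset_antisymm
    · exact T'.lca_subset (T'.lca_mem_clusters y z) (h2 (T'.mem_lca_left x y))
        (T'.mem_lca_right y z)
    · exact T'.lca_subset (T'.lca_mem_clusters x z) (h1.subset (T'.mem_lca_right x y))
        (T'.mem_lca_right x z)
  exact ⟨hxy, hxz, hyz, h1, h3⟩

end PhyloTree

/-- Every tree has a binary refinement. -/
lemma exists_binary_refinement (T : PhyloTree V) :
    ∃ T' : PhyloTree V, T'.IsBinary ∧ T'.Refines T := by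
  classical
  set Good : Set (Set (Set V)) :=
    {F | T.clusters ⊆ F ∧ (∀ A ∈ F, A.Nonempty) ∧ Set.univ ∈ F ∧ (∀ v : V, {v} ∈ F) ∧
      ∀ A ∈ F, ∀ B ∈ F, A ⊆ B ∨ B ⊆ A ∨ Disjoint A B} with hGood
  have hTG : T.clusters ∈ Good :=
    ⟨subset_rfl, T.nonempty_of_mem, T.univ_mem, T.singleton_mem, T.nested⟩
  obtain ⟨M, hM, hmax⟩ := Set.Finite.exists_maximalFor id Good (Set.toFinite Good) ⟨_, hTG⟩
  obtain ⟨hTM, hne, huniv, hsing, hnest⟩ := hM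
  refine ⟨⟨M, hne, huniv, hsing, hnest⟩, ?_, hTM⟩
  intro A hA hcard
  simp only at hA ⊢
  obtain ⟨a, b, ha, hb, hab⟩ := (Set.one_lt_ncard_iff (Set.toFinite A)).mp hcard
  set S : Set (Set V) := {X | X ∈ M ∧ a ∈ X ∧ X ⊂ A} with hSdef
  have hSne : S.Nonempty := by
    refine ⟨{a}, hsing a, rfl, HasSubset.Subset.ssubset_of_not_subset
      (Set.singleton_subset_iff.mpr ha) (fun h => hab ?_)⟩
    have := h hb
    simpa using this.symm
  have hSchain : ∀ X ∈ S, ∀ Y ∈ S, X ⊆ Y ∨ Y ⊆ X := fun X hX Y hY =>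
    (hnest X hX.1 Y hY.1).elim Or.inl (fun h => h.elim Or.inr
      (fun h => absurd hY.2.1 (Set.disjoint_left.mp h hX.2.1)))
  obtain ⟨B, hBS, hBmax⟩ := chain_max hSne hSchain
  obtain ⟨hBM, haB, hBA⟩ := hBS
  have key : ∀ X ∈ M, X ⊂ A → X ⊆ B ∨ X ⊆ A \ B := by
    intro X hX hXA
    obtain ⟨x, hx⟩ := hne X hX
    set Sx : Set (Set V) := {Y | Y ∈ M ∧ x ∈ Y ∧ Y ⊂ A} with hSx
    have hSxne : Sx.Nonempty := ⟨X, hX, hx, hXA⟩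
    have hSxchain : ∀ P ∈ Sx, ∀ Q ∈ Sx, P ⊆ Q ∨ Q ⊆ P := fun P hP Q hQ =>
      (hnest P hP.1 Q hQ.1).elim Or.inl (fun h => h.elim Or.inr
        (fun h => absurd hQ.2.1 (Set.disjoint_left.mp h hP.2.1)))
    obtain ⟨Cx, hCxS, hCxmax⟩ := chain_max hSxne hSxchain
    have hXCx : X ⊆ Cx := hCxmax X ⟨hX, hx, hXA⟩
    rcases hnest Cx hCxS.1 B hBM with h | h | h
    · exact Or.inl (hXCx.trans h)
    · have : Cx ⊆ B := hBmax Cx ⟨hCxS.1, h haB, hCxS.2.2⟩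
      exact Or.inl (hXCx.trans this)
    · exact Or.inr (hXCx.trans (Set.subset_diff.mpr ⟨hCxS.2.2.subset, h⟩))
  have hDne : (A \ B).Nonempty := by
    obtain ⟨c, hcA, hcB⟩ := Set.exists_of_ssubset hBA
    exact ⟨c, hcA, hcB⟩
  have hDM : A \ B ∈ M := by
    by_contra hDnM
    have hXD : ∀ X ∈ M, X ⊆ A \ B ∨ A \ B ⊆ X ∨ Disjoint X (A \ B) := by
      intro X hX
      rcases hnest X hX A hA with h | h | h
      · rcases eq_or_ne X A with rfl | hne'
        · exact Or.inr (Or.inl Set.diff_subset)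
        · rcases key X hX (HasSubset.Subset.ssubset_of_not_subset h
            (fun h' => hne' (subset_antisymm h h'))) with h' | h'
          · exact Or.inr (Or.inr (Set.disjoint_left.mpr fun v hv hvD => hvD.2 (h' hv)))
          · exact Or.inl h'
      · exact Or.inr (Or.inl (Set.diff_subset.trans h))
      · exact Or.inr (Or.inr (Set.disjoint_left.mpr fun v hv hvD =>
          (Set.disjoint_left.mp h hv) hvD.1))
    have hvalid : insert (A \ B) M ∈ Good := by
      refine ⟨hTM.trans (Set.subset_insert _ _), ?_, Set.mem_insert_of_mem _ huniv,
        fun v => Set.mem_insert_of_mem _ (hsing v), ?_⟩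
      · rintro X (rfl | hX)
        · exact hDne
        · exact hne X hX
      · rintro X (rfl | hX) Y (rfl | hY)
        · exact Or.inl subset_rfl
        · rcases hXD Y hY with h | h | h
          · exact Or.inr (Or.inl h)
          · exact Or.inl h
          · exact Or.inr (Or.inr h.symm)
        · exact hXD X hX
        · exact hnest X hX Y hY
    have heq : id M = id (insert (A \ B) M) := subset_antisymm (Set.subset_insert _ _) (hmax hvalid (Set.subset_insert _ _))
    simp only [id] at heq
    rw [heq] at hDnM
    exact hDnM (Set.mem_insert _ _)
  refine ⟨B, hBM, A \ B, hDM, Set.disjoint_sdiff_right,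
    Set.union_diff_cancel hBA.subset, hBA, ?_⟩
  exact HasSubset.Subset.ssubset_of_not_subset Set.diff_subset (fun h => (h ha).2 haB)

section Colored

variable {C : Type*} {E : V → V → Prop} {σ : V → C}

/-- If `(G,σ)` is sf-colored and `T` displays `R^bin(G,σ)`, then `T` explains `(G,σ)`. -/
lemma explains_of_displays_Rbin {T : PhyloTree V} (hsf : SfColored E σ)
    (hd : T.DisplaysSet (Rbin E σ)) : Explains T σ E := by
  intro x y
  constructor
  · intro hE
    refine ⟨hsf.1 x y hE, fun y' hσ' => ?_⟩
    rcases eq_or_ne y y' with rfl | hne'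
    · exact subset_rfl
    by_cases hE' : E x y'
    · have hF : ((y, y', x) : V × V × V) ∈ Rbin E σ :=
        Or.inr (show ((x, y, y') : V × V × V) ∈ forbiddenTriples E σ from
          ⟨hsf.1 x y hE, hσ'.symm, hne', hE, hE'⟩)
      have heq := (hd _ hF).2.2.2.2
      rw [T.lca_comm x y, heq, T.lca_comm y' x]
    · have hR : ((x, y, y') : V × V × V) ∈ Rbin E σ :=
        Or.inl ⟨hsf.1 x y hE, hσ'.symm, hE, hE'⟩
      exact (hd _ hR).2.2.2.1.subset
  · rintro ⟨hσxy, hbm⟩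
    obtain ⟨z, hEz, hσz⟩ := hsf.2 x y (Ne.symm hσxy)
    by_contra hnE
    have hR : ((x, z, y) : V × V × V) ∈ Rbin E σ :=
      Or.inl ⟨fun h => hσxy (h.trans hσz), hσz, hEz, hnE⟩
    exact (hd _ hR).2.2.2.1.not_subset (hbm z hσz)

/-- An explaining tree witnesses sf-coloredness. -/
lemma sfColored_of_explains {T : PhyloTree V} (hex : Explains T σ E) : SfColored E σ := by
  constructor
  · exact fun x y h => ((hex x y).mp h).1
  · intro x y hσ
    set S : Set (Set V) := {A | ∃ y', σ y' = σ y ∧ A = T.lca x y'} with hSdef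
    have hSne : S.Nonempty := ⟨T.lca x y, y, rfl, rfl⟩
    have hSchain : ∀ A ∈ S, ∀ B ∈ S, A ⊆ B ∨ B ⊆ A := by
      rintro A ⟨y1, -, rfl⟩ B ⟨y2, -, rfl⟩
      exact T.lca_chain x y1 y2
    obtain ⟨M, hMS, hmin⟩ := chain_min hSne hSchain
    obtain ⟨y0, hσ0, rfl⟩ := hMS
    refine ⟨y0, (hex x y0).mpr ⟨fun h => hσ (by rw [← hσ0, ← h]), fun y' hy' => ?_⟩, hσ0⟩
    exact hmin _ ⟨y', hy'.trans hσ0, rfl⟩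

/-- A binary explaining tree displays `R^bin(G,σ)`. -/
lemma displays_Rbin_of_explains {T : PhyloTree V} (hbin : T.IsBinary)
    (hex : Explains T σ E) : T.DisplaysSet (Rbin E σ) := by
  rintro ⟨p, q, r⟩ (⟨hab, hbb, hE, hnE⟩ | hF)
  · -- informative triple pq|r : σ p ≠ σ q = σ r, E p q, ¬ E p r
    obtain ⟨-, hbm⟩ := (hex p q).mp hE
    have hsub : T.lca p q ⊆ T.lca p r := hbm r hbb.symm
    have hnsub : ¬ T.lca p r ⊆ T.lca p q := by
      intro h
      exact hnE ((hex p r).mpr ⟨hbb ▸ hab, fun y' hy' =>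
        h.trans (hbm y' (hy'.trans hbb.symm))⟩)
    have hss : T.lca p q ⊂ T.lca p r := HasSubset.Subset.ssubset_of_not_subset hsub hnsub
    have hqr : q ≠ r := fun h => hnE (h ▸ hE)
    have hrn : r ∉ T.lca p q := fun h =>
      hnsub (T.lca_subset (T.lca_mem_clusters p q) (T.mem_lca_left p q) h)
    have h1 : T.lca p q ⊆ T.lca q r := by
      rcases T.cluster_chain (T.lca_mem_clusters q r) (T.lca_mem_clusters p q)
        (T.mem_lca_left q r) (T.mem_lca_right p q) with h | h
      · exact absurd (h (T.mem_lca_right q r)) hrn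
      · exact h
    have heq : T.lca p r = T.lca q r :=
      subset_antisymm
        (T.lca_subset (T.lca_mem_clusters q r) (h1 (T.mem_lca_left p q))
          (T.mem_lca_right q r))
        (T.lca_subset (T.lca_mem_clusters p r) (hss.subset (T.mem_lca_right p q))
          (T.mem_lca_right p r))
    exact ⟨fun h => hab (congrArg σ h), fun h => (hbb ▸ hab) (congrArg σ h), hqr, hss, heq⟩
  · -- hF : (r, p, q) ∈ forbiddenTriples, show Displays p q r
    obtain ⟨hab, hpq, hpqne, hEp, hEq⟩ := hF
    have hbmp := ((hex r p).mp hEp).2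
    have hbmq := ((hex r q).mp hEq).2
    have heqA : T.lca r p = T.lca r q := subset_antisymm (hbmp q hpq.symm) (hbmq p hpq)
    have hpr : p ≠ r := fun h => hab (congrArg σ h).symm
    have hqr : q ≠ r := fun h => hab (hpq.trans (congrArg σ h)).symm
    have hcard : 1 < (T.lca r p).ncard :=
      (Set.one_lt_ncard_iff (Set.toFinite _)).mpr
        ⟨r, p, T.mem_lca_left r p, T.mem_lca_right r p, Ne.symm hpr⟩
    obtain ⟨B, hB, D, hD, hdisj, hunion, hBA, hDA⟩ :=
      hbin _ (T.lca_mem_clusters r p) hcard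
    have main : ∀ B ∈ T.clusters, ∀ D ∈ T.clusters, Disjoint B D →
        B ∪ D = T.lca r p → B ⊂ T.lca r p → D ⊂ T.lca r p → r ∈ B →
        T.Displays p q r := by
      intro B hB D hD hdisj hunion hBA hDA hrB
      have hpB : p ∉ B := fun h => hBA.not_subset (T.lca_subset hB hrB h)
      have hpD : p ∈ D := by
        have hmem := T.mem_lca_right r p
        rw [← hunion] at hmem
        exact hmem.elim (fun h => absurd h hpB) id
      have hqB : q ∉ B := fun h => hBA.not_subset (by
        rw [heqA]; exact T.lca_subset hB hrB h)
      have hqD : q ∈ D := by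
        have hmem := T.mem_lca_right r q
        rw [← heqA, ← hunion] at hmem
        exact hmem.elim (fun h => absurd h hqB) id
      have hsub : T.lca p q ⊆ D := T.lca_subset hD hpD hqD
      have hss : T.lca p q ⊂ T.lca p r := by
        rw [T.lca_comm p r]
        exact HasSubset.Subset.ssubset_of_not_subset (hsub.trans hDA.subset)
          (fun h => hDA.not_subset (h.trans hsub))
      have heq2 : T.lca p r = T.lca q r := by
        rw [T.lca_comm p r, T.lca_comm q r, heqA]
      exact ⟨hpqne, hpr, hqr, hss, heq2⟩
    have hrBD : r ∈ B ∪ D := hunion ▸ T.mem_lca_left r p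
    rcases hrBD with hrB | hrD
    · exact main B hB D hD hdisj hunion hBA hDA hrB
    · exact main D hD B hB hdisj.symm (by rw [Set.union_comm]; exact hunion) hDA hBA hrD

end Colored

end Aux

/-- Theorem: Rbin-MAIN.
A properly vertex-colored digraph `(G,σ)` is binary-explainable if and only if
(i) `(G,σ)` is sf-colored and (ii) the extended triple set `R^bin(G,σ)` is consistent. -/
theorem stmt3 {V C : Type*} [Fintype V] (E : V → V → Prop) (σ : V → C)
    (hproper : ProperlyColored E σ) :
    BinaryExplainable E σ ↔ SfColored E σ ∧ Consistent (Rbin E σ) := by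
  constructor
  · rintro ⟨T, hbin, hex⟩
    exact ⟨sfColored_of_explains hex, T, displays_Rbin_of_explains hbin hex⟩
  · rintro ⟨hsf, T0, hdisp⟩
    obtain ⟨T, hbin, href⟩ := exists_binary_refinement T0
    exact ⟨T, hbin, explains_of_displays_Rbin hsf
      (fun t ht => PhyloTree.Displays.of_refines href (hdisp t ht))⟩
end

section
/- Let (G,σ) be an sf-colored digraph with nonempty vertex set L. Let L_{R,F} be the union of the leaf sets of the triples in R(G,σ)∪F(G,σ) and L_{Rbin} the union of the leaf sets of the triples in R^bin(G,σ). Then the following statements are equivalent: (1) L_{R,F}=L and L_{Rbin}=L; (2) R(G,σ)∪F(G,σ) is nonempty; (3) R^bin(G,σ) is nonempty; (4) (G,σ) uses at least two colors and contains two vertices of the same color. -/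
/-- Key lemma: under the sf-coloring and condition (4), every vertex is a leaf of
some triple in `R ∪ F`. -/
lemma key_no_vertex_lost {V C : Type*} (E : V → V → Prop) (σ : V → C)
    (hsf : SfColored E σ) (h2 : ∃ x y : V, σ x ≠ σ y)
    (h4 : ∃ b b' : V, b ≠ b' ∧ σ b = σ b') (v : V) :
    ∃ t ∈ informativeTriples E σ ∪ forbiddenTriples E σ,
      v = t.1 ∨ v = t.2.1 ∨ v = t.2.2 := by
  by_cases hu : ∃ u : V, u ≠ v ∧ σ u = σ v
  · -- some other vertex has the same color as v
    obtain ⟨u, huv, huc⟩ := hu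
    -- find a vertex a with σ a ≠ σ v
    obtain ⟨x, y, hxy⟩ := h2
    obtain ⟨a, ha⟩ : ∃ a : V, σ a ≠ σ v := by
      by_cases hx : σ x = σ v
      · exact ⟨y, fun h => hxy (hx.trans h.symm)⟩
      · exact ⟨x, hx⟩
    obtain ⟨z, hEz, hz⟩ := hsf.2 a v (Ne.symm ha)
    by_cases hzv : z = v
    · subst hzv
      by_cases hEu : E a u
      · exact ⟨(a, z, u), Or.inr ⟨fun h => ha (h.trans hz), hz.trans huc.symm,
          fun h => huv (h.symm), hEz, hEu⟩, Or.inr (Or.inl rfl)⟩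
      · exact ⟨(a, z, u), Or.inl ⟨fun h => ha (h.trans hz), hz.trans huc.symm,
          hEz, hEu⟩, Or.inr (Or.inl rfl)⟩
    · by_cases hEv : E a v
      · exact ⟨(a, z, v), Or.inr ⟨fun h => ha (h.trans hz), hz, hzv, hEz, hEv⟩,
          Or.inr (Or.inr rfl)⟩
      · exact ⟨(a, z, v), Or.inl ⟨fun h => ha (h.trans hz), hz, hEz, hEv⟩,
          Or.inr (Or.inr rfl)⟩
  · -- v's color is unique
    push_neg at hu
    obtain ⟨b, b', hbb, hbc⟩ := h4
    have hbv : σ b ≠ σ v := by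
      intro h
      have hb : b = v := by by_contra hc; exact (hu b hc) h
      have hb' : b' = v := by by_contra hc; exact (hu b' hc) (hbc.symm.trans h)
      exact hbb (hb.trans hb'.symm)
    obtain ⟨z, hEz, hz⟩ := hsf.2 v b hbv
    have hvz : σ v ≠ σ z := fun h => hbv (hz.symm.trans h.symm)
    obtain ⟨w, hzw, hw⟩ : ∃ w : V, z ≠ w ∧ σ z = σ w := by
      by_cases hzb : z = b
      · exact ⟨b', hzb ▸ hbb, hz.trans hbc⟩
      · exact ⟨b, hzb, hz⟩
    by_cases hEw : E v w
    · exact ⟨(v, z, w), Or.inr ⟨hvz, hw, hzw, hEz, hEw⟩, Or.inl rfl⟩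
    · exact ⟨(v, z, w), Or.inl ⟨hvz, hw, hEz, hEw⟩, Or.inl rfl⟩

/-- Lemma: no-vertex-lost.
Let `(G,σ)` be an sf-colored digraph with nonempty vertex set `L`. Let `L_{R,F}` be
the union of the leaf sets of the triples in `R(G,σ) ∪ F(G,σ)` and `L_{Rbin}` the union
of the leaf sets of the triples in `R^bin(G,σ)`. Then the following are equivalent:
(1) `L_{R,F} = L` and `L_{Rbin} = L`; (2) `R(G,σ) ∪ F(G,σ) ≠ ∅`; (3) `R^bin(G,σ) ≠ ∅`;
(4) `(G,σ)` uses at least two colors and contains two vertices of the same color. -/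
theorem stmt6 {V C : Type*} [Fintype V] [Nonempty V] (E : V → V → Prop) (σ : V → C)
    (hsf : SfColored E σ) :
    ((tripleLeaves (informativeTriples E σ ∪ forbiddenTriples E σ) = Set.univ ∧
        tripleLeaves (Rbin E σ) = Set.univ) ↔
      (informativeTriples E σ ∪ forbiddenTriples E σ).Nonempty) ∧
    ((informativeTriples E σ ∪ forbiddenTriples E σ).Nonempty ↔ (Rbin E σ).Nonempty) ∧
    ((Rbin E σ).Nonempty ↔
      ((∃ x y : V, σ x ≠ σ y) ∧ ∃ x y : V, x ≠ y ∧ σ x = σ y)) := by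
  -- (2) → (4)
  have h24 : (informativeTriples E σ ∪ forbiddenTriples E σ).Nonempty →
      (∃ x y : V, σ x ≠ σ y) ∧ ∃ x y : V, x ≠ y ∧ σ x = σ y := by
    rintro ⟨⟨a, b, b'⟩, (⟨h1, h2, h3, h4⟩ | ⟨h1, h2, h3, h4, h5⟩)⟩
    · exact ⟨⟨a, b, h1⟩, b, b', fun h => h4 (h ▸ h3), h2⟩
    · exact ⟨⟨a, b, h1⟩, b, b', h3, h2⟩
  -- (4) → (2)
  have h42 : ((∃ x y : V, σ x ≠ σ y) ∧ (∃ x y : V, x ≠ y ∧ σ x = σ y)) →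
      (informativeTriples E σ ∪ forbiddenTriples E σ).Nonempty := by
    rintro ⟨hc, hs⟩
    obtain ⟨t, ht, -⟩ := key_no_vertex_lost E σ hsf hc hs (Classical.arbitrary V)
    exact ⟨t, ht⟩
  -- (2) ↔ (3)
  have h23 : (informativeTriples E σ ∪ forbiddenTriples E σ).Nonempty ↔
      (Rbin E σ).Nonempty := by
    constructor
    · rintro ⟨t, (ht | ht)⟩
      · exact ⟨t, Or.inl ht⟩
      · exact ⟨(t.2.1, t.2.2, t.1), Or.inr ht⟩
    · rintro ⟨t, (ht | ht)⟩
      · exact ⟨t, Or.inl ht⟩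
      · exact ⟨(t.2.2, t.1, t.2.1), Or.inr ht⟩
  refine ⟨?_, h23, h23.symm.trans ⟨h24, h42⟩⟩
  constructor
  · rintro ⟨h1, -⟩
    have hv : (Classical.arbitrary V) ∈
        tripleLeaves (informativeTriples E σ ∪ forbiddenTriples E σ) := by
      rw [h1]; trivial
    obtain ⟨t, ht, -⟩ := hv
    exact ⟨t, ht⟩
  · intro h2
    obtain ⟨hc, hs⟩ := h24 h2
    constructor
    · ext v
      simp only [Set.mem_univ, iff_true]
      exact key_no_vertex_lost E σ hsf hc hs v
    · ext v
      simp only [Set.mem_univ, iff_true]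
      obtain ⟨t, (ht | ht), hv⟩ := key_no_vertex_lost E σ hsf hc hs v
      · exact ⟨t, Or.inl ht, hv⟩
      · refine ⟨(t.2.1, t.2.2, t.1), Or.inr ht, ?_⟩
        rcases hv with h | h | h
        · exact Or.inr (Or.inr h)
        · exact Or.inl h
        · exact Or.inr (Or.inl h)
end
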